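/- For every positive integer t and nonnegative integer n, p_{2t,t}(n) = p(n) + Σ_{r≥1} p(n − 4t·r²) − Σ_{s≥1} p(n − t(2s−1)²), where p(m) = 0 for negative m. -/

import Mathlib

open PowerSeries Finset

/-- The ordinary partition function `p`, extended by zero to negative integers. -/
noncomputable def pInt (m : ℤ) : ℤ :=
  if 0 ≤ m then (Fintype.card (Nat.Partition m.toNat) : ℤ) else 0

/-- `(q^t; q^t)_∞ = ∏_{j ≥ 1} (1 - q^{t j})` as a formal power series over ℤ
(the `n`-th coefficient only depends on the factors with `t(j+1) ≤ n`, so the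
truncated finite product gives the correct coefficient). -/
noncomputable def euler (t : ℕ) : PowerSeries ℤ :=
  PowerSeries.mk fun n =>
    PowerSeries.coeff n
      (∏ j ∈ Finset.range (n + 1), (1 - (PowerSeries.X : PowerSeries ℤ) ^ (t * (j + 1))))

/-- `Σ_{k ≥ 0} (-1)^k q^{t k (k+1)/2}` as a formal power series over ℤ. -/
noncomputable def theta (t : ℕ) : PowerSeries ℤ :=
  PowerSeries.mk fun m =>
    ∑ k ∈ Finset.range (m + 1), if 2 * m = t * k * (k + 1) then (-1 : ℤ) ^ k else 0

/-- `Σ_{k ≥ 0} (-1)^k q^{t k^2}` as a formal power series over ℤ. -/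
noncomputable def thetaSq (t : ℕ) : PowerSeries ℤ :=
  PowerSeries.mk fun m =>
    ∑ k ∈ Finset.range (m + 1), if m = t * k ^ 2 then (-1 : ℤ) ^ k else 0

/-- `(-q^a; q^k)_∞ = ∏_{j ≥ 0} (1 + q^{a + k j})` as a formal power series over ℤ. -/
noncomputable def aqk (a k : ℕ) : PowerSeries ℤ :=
  PowerSeries.mk fun n =>
    PowerSeries.coeff n
      (∏ j ∈ Finset.range (n + 1), (1 + (PowerSeries.X : PowerSeries ℤ) ^ (a + k * j)))

/-- Extension of a function on ℕ by zero to ℤ. -/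
noncomputable def extZ (f : ℕ → ℤ) : ℤ → ℤ := fun m => if 0 ≤ m then f m.toNat else 0

namespace PartitionAux

noncomputable section

open scoped Classical

/-- A convenience constructor for the power series whose coefficients indicate a subset. -/
def indicatorSeries (α : Type*) [Semiring α] (s : Set ℕ) : PowerSeries α :=
  PowerSeries.mk fun n => if n ∈ s then 1 else 0

variable {α : Type*}

theorem coeff_indicator (s : Set ℕ) [Semiring α] (n : ℕ) :
    coeff n (indicatorSeries α s) = if n ∈ s then 1 else 0 :=
  coeff_mk _ _

open Finset.HasAntidiagonal

-- The main workhorse (copied from Archive/Wiedijk100Theorems/Partition.lean).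
theorem partialGF_prop (α : Type*) [CommSemiring α] (n : ℕ) (s : Finset ℕ) (hs : ∀ i ∈ s, 0 < i)
    (c : ℕ → Set ℕ) (hc : ∀ i, i ∉ s → 0 ∈ c i) :
    #{p : n.Partition | (∀ j, p.parts.count j ∈ c j) ∧ ∀ j ∈ p.parts, j ∈ s} =
      coeff n (∏ i ∈ s, indicatorSeries α ((· * i) '' c i)) := by
  simp_rw [coeff_prod, coeff_indicator, prod_boole, sum_boole]
  apply congr_arg
  simp only [mem_univ, forall_true_left, not_and, not_forall, exists_prop,
    Set.mem_image, not_exists]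
  set φ : (a : Nat.Partition n) →
    a ∈ filter (fun p ↦ (∀ (j : ℕ), Multiset.count j p.parts ∈ c j) ∧ ∀ j ∈ p.parts, j ∈ s) univ →
    ℕ →₀ ℕ := fun p _ => {
      toFun := fun i => Multiset.count i p.parts • i
      support := Finset.filter (fun i => i ≠ 0) p.parts.toFinset
      mem_support_toFun := fun a => by
        simp only [smul_eq_mul, ne_eq, mul_eq_zero, Multiset.count_eq_zero]
        rw [not_or, not_not]
        simp only [Multiset.mem_toFinset, not_not, mem_filter] }
  refine Finset.card_bij φ ?_ ?_ ?_
  · intro a ha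
    simp only [φ, not_forall, not_exists, not_and, exists_prop, mem_filter]
    rw [mem_finsuppAntidiag]
    dsimp only [ne_eq, smul_eq_mul, id_eq, eq_mpr_eq_cast, le_eq_subset, Finsupp.coe_mk]
    simp only [mem_univ, forall_true_left, not_and, not_forall, exists_prop,
      mem_filter, true_and] at ha
    refine ⟨⟨?_, fun i ↦ ?_⟩, fun i _ ↦ ⟨a.parts.count i, ha.1 i, rfl⟩⟩
    · conv_rhs => simp [← a.parts_sum]
      rw [sum_multiset_count_of_subset _ s]
      · simp only [smul_eq_mul]
      · intro i
        simp only [Multiset.mem_toFinset, not_not, mem_filter]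
        apply ha.2
    · simp only [ne_eq, Multiset.mem_toFinset, not_not, mem_filter, and_imp]
      exact fun hi _ ↦ ha.2 i hi
  · intro p₁ hp₁ p₂ hp₂ h
    apply Nat.Partition.ext
    simp only [true_and, mem_univ, mem_filter] at hp₁ hp₂
    ext i
    simp only [φ, ne_eq, Multiset.mem_toFinset, not_not, smul_eq_mul, Finsupp.mk.injEq] at h
    by_cases hi : i = 0
    · rw [hi]
      rw [Multiset.count_eq_zero_of_notMem]
      · rw [Multiset.count_eq_zero_of_notMem]
        intro a; exact Nat.lt_irrefl 0 (hs 0 (hp₂.2 0 a))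
      intro a; exact Nat.lt_irrefl 0 (hs 0 (hp₁.2 0 a))
    · rw [← mul_left_inj' hi]
      rw [funext_iff] at h
      exact h.2 i
  · simp only [φ, mem_filter, mem_finsuppAntidiag, mem_univ, exists_prop, true_and, and_assoc]
    rintro f ⟨hf, hf₃, hf₄⟩
    have hf' : f ∈ finsuppAntidiag s n := mem_finsuppAntidiag.mpr ⟨hf, hf₃⟩
    simp only [mem_finsuppAntidiag] at hf'
    refine ⟨⟨∑ i ∈ s, Multiset.replicate (f i / i) i, ?_, ?_⟩, ?_, ?_, ?_⟩
    · intro i hi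
      simp only [exists_prop, Multiset.mem_sum, mem_map, Function.Embedding.coeFn_mk] at hi
      rcases hi with ⟨t, ht, z⟩
      apply hs
      rwa [Multiset.eq_of_mem_replicate z]
    · simp_rw [Multiset.sum_sum, Multiset.sum_replicate, Nat.nsmul_eq_mul]
      rw [← hf'.1]
      refine sum_congr rfl fun i hi => Nat.div_mul_cancel ?_
      rcases hf₄ i hi with ⟨w, _, hw₂⟩
      rw [← hw₂]
      exact dvd_mul_left _ _
    · intro i
      simp_rw [Multiset.count_sum', Multiset.count_replicate, sum_ite_eq']
      split_ifs with h
      · rcases hf₄ i h with ⟨w, hw₁, hw₂⟩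
        rwa [← hw₂, Nat.mul_div_cancel _ (hs i h)]
      · exact hc _ h
    · intro i hi
      rw [Multiset.mem_sum] at hi
      rcases hi with ⟨j, hj₁, hj₂⟩
      rwa [Multiset.eq_of_mem_replicate hj₂]
    · ext i
      simp_rw [Multiset.count_sum', Multiset.count_replicate, sum_ite_eq']
      simp only [ne_eq, Multiset.mem_toFinset, not_not, smul_eq_mul, ite_mul,
        zero_mul, Finsupp.coe_mk]
      split_ifs with h
      · apply Nat.div_mul_cancel
        rcases hf₄ i h with ⟨w, _, hw₂⟩
        apply Dvd.intro_left _ hw₂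
      · apply symm
        rw [← Finsupp.notMem_support_iff]
        exact notMem_mono hf'.2 h

/-- the generating series of multiples of `i`. -/
def mult (i : ℕ) : PowerSeries ℤ := indicatorSeries ℤ ((· * i) '' Set.univ)

theorem mem_image_mul (i m : ℕ) : m ∈ (· * i) '' Set.univ ↔ i ∣ m := by
  constructor
  · rintro ⟨a, -, rfl⟩; exact Dvd.intro_left a rfl
  · rintro ⟨c, rfl⟩; exact ⟨c, Set.mem_univ c, mul_comm c i⟩

theorem mult_mul_one_sub (i : ℕ) : mult (i + 1) * (1 - X ^ (i + 1)) = 1 := by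
  ext n
  rw [mul_sub, mul_one, map_sub, coeff_mul_X_pow']
  simp only [mult, coeff_indicator, mem_image_mul, coeff_one]
  rcases Nat.eq_zero_or_pos n with rfl | hn
  · simp
  · have h1 : (i + 1) ∣ n ↔ (i + 1 ≤ n ∧ (i + 1) ∣ n - (i + 1)) := by
      constructor
      · intro h
        have hle : i + 1 ≤ n := Nat.le_of_dvd hn h
        exact ⟨hle, (Nat.dvd_sub h dvd_rfl)⟩
      · rintro ⟨hle, h⟩
        have : n = (n - (i + 1)) + (i + 1) := by omega
        rw [this]; exact Nat.dvd_add h dvd_rfl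
    split_ifs with h2 h3 h4 <;> simp_all

theorem prod_mult_mul (m : ℕ) :
    (∏ i ∈ range m, mult (i + 1)) * ∏ i ∈ range m, (1 - X ^ (i + 1)) = 1 := by
  rw [← prod_mul_distrib]
  simp [mult_mul_one_sub]

theorem coeff_prod_mult (n m : ℕ) (h : n ≤ m) :
    coeff n (∏ i ∈ range m, mult (i + 1)) = (Fintype.card (Nat.Partition n) : ℤ) := by
  have := partialGF_prop ℤ n ((range m).map ⟨Nat.succ, Nat.succ_injective⟩)
    (fun i hi => by
      simp only [mem_map, Function.Embedding.coeFn_mk, mem_range] at hi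
      obtain ⟨a, -, rfl⟩ := hi; exact Nat.succ_pos a)
    (fun _ => Set.univ) (fun _ _ => Set.mem_univ 0)
  rw [Finset.prod_map] at this
  have heq : (∏ i ∈ range m, mult (i + 1)) =
      ∏ x ∈ range m, indicatorSeries ℤ
        ((· * (⟨Nat.succ, Nat.succ_injective⟩ : ℕ ↪ ℕ) x) '' Set.univ) := by
    apply prod_congr rfl
    intro x _
    simp [mult, Nat.succ_eq_add_one]
  rw [heq, ← this]
  congr 1
  have huniv : (filter (fun p : Nat.Partition n =>
      (∀ j, p.parts.count j ∈ (Set.univ : Set ℕ)) ∧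
        ∀ j ∈ p.parts, j ∈ (range m).map ⟨Nat.succ, Nat.succ_injective⟩) univ) = univ := by
    apply Finset.filter_true_of_mem
    intro p _
    refine ⟨fun _ => Set.mem_univ _, fun j hj => ?_⟩
    have hj1 : 0 < j := p.parts_pos hj
    have hj2 : j ≤ n := by
      simpa [p.parts_sum] using Multiset.single_le_sum (fun _ _ => Nat.zero_le _) _ hj
    simp only [mem_map, Function.Embedding.coeFn_mk, mem_range]
    exact ⟨j - 1, by omega, by omega⟩
  rw [huniv, Finset.card_univ]

theorem coeff_prod_one_sub_stable (n m m' : ℕ) (h : n ≤ m) (h' : m ≤ m') :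
    coeff (R := ℤ) n (∏ j ∈ range m', (1 - X ^ (j + 1))) =
      coeff (R := ℤ) n (∏ j ∈ range m, (1 - X ^ (j + 1))) := by
  rw [← Finset.prod_range_mul_prod_Ico _ h']
  apply coeff_mul_prod_one_sub_of_lt_order
  intro i hi
  rw [order_X_pow]
  rw [Finset.mem_Ico] at hi
  exact_mod_cast Nat.lt_succ_of_le (le_trans h hi.1)

theorem coeff_euler_one (n m : ℕ) (h : n ≤ m) :
    coeff n (euler 1) = coeff (R := ℤ) n (∏ j ∈ range m, (1 - X ^ (j + 1))) := by
  have heq : euler 1 = PowerSeries.mk fun n =>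
      PowerSeries.coeff n (∏ j ∈ Finset.range (n + 1), (1 - X ^ (j + 1))) := by
    simp [euler]
  rw [heq, coeff_mk, coeff_prod_one_sub_stable n n m le_rfl h,
    coeff_prod_one_sub_stable n n (n + 1) le_rfl (Nat.le_succ n)]

/-- The partition-counting function, as an integer. -/
def pN (n : ℕ) : ℤ := (Fintype.card (Nat.Partition n) : ℤ)

theorem p_mul_euler : PowerSeries.mk pN * euler 1 = 1 := by
  ext n
  have key : coeff n ((∏ i ∈ range (n + 1), mult (i + 1)) *
      ∏ j ∈ range (n + 1), (1 - X ^ (j + 1))) = coeff n 1 := by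
    rw [prod_mult_mul]
  rw [← key, coeff_mul, coeff_mul]
  apply sum_congr rfl
  rintro ⟨a, b⟩ hab
  rw [HasAntidiagonal.mem_antidiagonal] at hab
  rw [coeff_mk, coeff_prod_mult a (n + 1) (by omega),
    coeff_euler_one b (n + 1) (by omega), pN]

theorem pInt_coe (m : ℕ) : pInt (m : ℤ) = pN m := by simp [pInt, pN]

theorem pInt_neg' {m : ℤ} (h : m < 0) : pInt m = 0 := if_neg (not_le.mpr h)

theorem coeff_theta_mul (t n : ℕ) (ht : 0 < t) :
    coeff n (thetaSq t * PowerSeries.mk pN) =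
      ∑ k ∈ range (n + 1), (-1 : ℤ) ^ k * pInt ((n : ℤ) - t * k ^ 2) := by
  rw [coeff_mul, Finset.Nat.sum_antidiagonal_eq_sum_range_succ_mk]
  have step1 : ∀ i ∈ range (n + 1),
      coeff i (thetaSq t) * coeff (n - i) (PowerSeries.mk pN)
        = ∑ k ∈ range (n + 1), (if i = t * k ^ 2 then (-1 : ℤ) ^ k * pN (n - i) else 0) := by
    intro i hi
    rw [mem_range] at hi
    rw [thetaSq, coeff_mk, coeff_mk, Finset.sum_mul]
    simp only [ite_mul, zero_mul]
    apply Finset.sum_subset (range_subset_range.mpr (by omega : i + 1 ≤ n + 1))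
    intro k hk hk2
    rw [mem_range, not_lt] at hk2
    rw [if_neg]
    intro hcon
    have h1 : k ≤ k ^ 2 := by nlinarith
    have h2 : k ^ 2 ≤ t * k ^ 2 := Nat.le_mul_of_pos_left _ ht
    omega
  rw [Finset.sum_congr rfl step1, Finset.sum_comm]
  apply sum_congr rfl
  intro k _
  rw [Finset.sum_ite_eq' (range (n + 1)) (t * k ^ 2) (fun i => (-1 : ℤ) ^ k * pN (n - i))]
  have hc : ((t * k ^ 2 : ℕ) : ℤ) = (t : ℤ) * (k : ℤ) ^ 2 := by push_cast; ring
  split_ifs with h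
  · rw [mem_range] at h
    have harg : (n : ℤ) - t * k ^ 2 = ((n - t * k ^ 2 : ℕ) : ℤ) := by rw [← hc]; omega
    rw [harg, pInt_coe]
  · rw [mem_range, not_lt] at h
    have harg : (n : ℤ) - t * k ^ 2 < 0 := by rw [← hc]; omega
    rw [pInt_neg' harg, mul_zero]

theorem even_odd_split (g : ℕ → ℤ) (m : ℕ) :
    ∑ k ∈ range (2 * m), g k = ∑ r ∈ range m, g (2 * r) + ∑ r ∈ range m, g (2 * r + 1) := by
  induction m with
  | zero => simp
  | succ m ih =>
    have h2 : 2 * (m + 1) = (2 * m + 1) + 1 := by ring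
    rw [h2, sum_range_succ, sum_range_succ, ih, sum_range_succ, sum_range_succ]
    ring

end

end PartitionAux

/-- For every positive integer t and nonnegative integer n,
p_{2t,t}(n) = p(n) + Σ_{r≥1} p(n − 4t r²) − Σ_{s≥1} p(n − t(2s−1)²),
where p_{2t,t} is defined by Σ p_{2t,t}(n) qⁿ = (1/(q;q)_∞) Σ (−1)ⁿ q^{t n²}. -/
theorem stmt1 (t : ℕ) (ht : 0 < t) (f : ℕ → ℤ)
    (hf : PowerSeries.mk f * euler 1 = thetaSq t) (n : ℕ) :
    f n = pInt n
      + ∑ r ∈ Finset.range n, pInt ((n : ℤ) - 4 * t * (r + 1) ^ 2)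
      - ∑ s ∈ Finset.range n, pInt ((n : ℤ) - t * (2 * (s + 1) - 1) ^ 2) := by
  open PartitionAux in
  have hmk : PowerSeries.mk f = thetaSq t * PowerSeries.mk PartitionAux.pN := by
    calc PowerSeries.mk f
        = PowerSeries.mk f * (euler 1 * PowerSeries.mk PartitionAux.pN) := by
          rw [mul_comm (euler 1), PartitionAux.p_mul_euler, mul_one]
      _ = (PowerSeries.mk f * euler 1) * PowerSeries.mk PartitionAux.pN := by ring
      _ = thetaSq t * PowerSeries.mk PartitionAux.pN := by rw [hf]
  have h1 : f n = ∑ k ∈ Finset.range (n + 1), (-1 : ℤ) ^ k * pInt ((n : ℤ) - t * k ^ 2) := by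
    have hc := congrArg (PowerSeries.coeff n) hmk
    rw [PowerSeries.coeff_mk] at hc
    rw [hc, PartitionAux.coeff_theta_mul t n ht]
  have h2 : ∑ k ∈ Finset.range (n + 1), (-1 : ℤ) ^ k * pInt ((n : ℤ) - t * k ^ 2)
      = ∑ k ∈ Finset.range (2 * (n + 1)), (-1 : ℤ) ^ k * pInt ((n : ℤ) - t * k ^ 2) := by
    apply Finset.sum_subset (Finset.range_subset_range.mpr (by omega))
    intro k hk hk2
    rw [Finset.mem_range, not_lt] at hk2
    have harg : (n : ℤ) - t * k ^ 2 < 0 := by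
      have hnk : n < t * k ^ 2 := by nlinarith
      have := (Nat.cast_lt (α := ℤ)).mpr hnk
      push_cast at this ⊢
      omega
    rw [PartitionAux.pInt_neg' harg, mul_zero]
  rw [h1, h2, PartitionAux.even_odd_split]
  have heven : ∑ r ∈ Finset.range (n + 1),
        (-1 : ℤ) ^ (2 * r) * pInt ((n : ℤ) - (t : ℤ) * ((2 * r : ℕ) : ℤ) ^ 2)
      = pInt n + ∑ r ∈ Finset.range n, pInt ((n : ℤ) - 4 * t * (r + 1) ^ 2) := by
    rw [Finset.sum_range_succ']
    have h0 : (-1 : ℤ) ^ (2 * 0) * pInt ((n : ℤ) - (t : ℤ) * ((2 * 0 : ℕ) : ℤ) ^ 2) = pInt n := by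
      norm_num
    rw [h0]
    rw [add_comm]
    congr 1
    apply Finset.sum_congr rfl
    intro r _
    have hsgn : (-1 : ℤ) ^ (2 * (r + 1)) = 1 := Even.neg_one_pow ⟨r + 1, by ring⟩
    rw [hsgn, one_mul]
    congr 1
    push_cast
    ring
  have hodd : ∑ s ∈ Finset.range (n + 1),
        (-1 : ℤ) ^ (2 * s + 1) * pInt ((n : ℤ) - (t : ℤ) * ((2 * s + 1 : ℕ) : ℤ) ^ 2)
      = - ∑ s ∈ Finset.range n, pInt ((n : ℤ) - t * (2 * (s + 1) - 1) ^ 2) := by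
    rw [Finset.sum_range_succ]
    have hlast : pInt ((n : ℤ) - t * (2 * n + 1 : ℕ) ^ 2) = 0 := by
      apply PartitionAux.pInt_neg'
      have hnk : n < t * (2 * n + 1) ^ 2 := by nlinarith
      have := (Nat.cast_lt (α := ℤ)).mpr hnk
      push_cast at this ⊢
      omega
    rw [hlast, mul_zero, add_zero, ← Finset.sum_neg_distrib]
    apply Finset.sum_congr rfl
    intro s _
    have hsgn : (-1 : ℤ) ^ (2 * s + 1) = -1 := Odd.neg_one_pow ⟨s, by ring⟩
    rw [hsgn]
    have harg : (n : ℤ) - (t : ℤ) * ((2 * s + 1 : ℕ) : ℤ) ^ 2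
        = (n : ℤ) - t * (2 * (s + 1) - 1) ^ 2 := by push_cast; ring
    rw [harg]
    ring
  rw [heven, hodd]
  ring
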